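/- arXiv:2211.04037 — 2 statements merged into one kernel-verified Lean document; each statement's English description precedes it below -/
import Mathlib

section
/- Let d ≥ 2, ε ∈ (0,1], and let A be a symmetric d×d real matrix with tr A > 0 satisfying the Cordes condition |A|²/(tr A)² ≤ 1/(d-1+ε). Set γ = tr(A)/|A|². Then for every d×d real matrix B one has |γ (A:B) − tr(B)| ≤ √(1−ε) |B|, where A:B = Σᵢⱼ aᵢⱼbᵢⱼ and |B| is the Frobenius norm of B. -/
theorem cordes_gamma_estimate (d : ℕ) (hd : 2 ≤ d) (ε : ℝ) (hε0 : 0 < ε) (hε1 : ε ≤ 1)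
    (A : Matrix (Fin d) (Fin d) ℝ) (hsymm : A.IsSymm)
    (htr : 0 < Matrix.trace A)
    (hcordes : (∑ i, ∑ j, A i j ^ 2) / (Matrix.trace A) ^ 2 ≤ 1 / ((d : ℝ) - 1 + ε))
    (γ : ℝ) (hγ : γ = Matrix.trace A / (∑ i, ∑ j, A i j ^ 2))
    (B : Matrix (Fin d) (Fin d) ℝ) :
    |γ * (∑ i, ∑ j, A i j * B i j) - Matrix.trace B| ≤
      Real.sqrt (1 - ε) * Real.sqrt (∑ i, ∑ j, B i j ^ 2) := by
  set T := Matrix.trace A with hT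
  set S := ∑ i, ∑ j, A i j ^ 2 with hS
  have hSnn : 0 ≤ S := Finset.sum_nonneg fun i _ =>
    Finset.sum_nonneg fun j _ => sq_nonneg _
  have hSpos : 0 < S := by
    rcases hSnn.lt_or_eq with h | h
    · exact h
    · exfalso
      have hzero : ∀ i ∈ Finset.univ, ∀ j ∈ (Finset.univ : Finset (Fin d)), A i j ^ 2 = 0 := by
        intro i _ j _
        have h1 := (Finset.sum_eq_zero_iff_of_nonneg (fun i _ =>
          Finset.sum_nonneg fun j _ => sq_nonneg (A i j))).mp h.symm i (Finset.mem_univ i)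
        exact (Finset.sum_eq_zero_iff_of_nonneg (fun j _ => sq_nonneg (A i j))).mp h1 j
          (Finset.mem_univ j)
      have : T = 0 := by
        rw [hT, Matrix.trace]
        apply Finset.sum_eq_zero
        intro i _
        have := hzero i (Finset.mem_univ i) i (Finset.mem_univ i)
        simpa [Matrix.diag] using pow_eq_zero_iff (n := 2) (by norm_num) |>.mp this
      exact absurd this (ne_of_gt htr)
  set f : Fin d × Fin d → ℝ := fun p => γ * A p.1 p.2 - (if p.1 = p.2 then 1 else 0) with hf
  set g : Fin d × Fin d → ℝ := fun p => B p.1 p.2 with hg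
  have key1 : γ * (∑ i, ∑ j, A i j * B i j) - Matrix.trace B = ∑ p, f p * g p := by
    rw [Fintype.sum_prod_type]
    simp only [hf, hg, sub_mul, ite_mul, one_mul, zero_mul, Finset.sum_sub_distrib,
      Finset.sum_ite_eq, Finset.mem_univ, if_true]
    rw [Matrix.trace]
    simp [Finset.mul_sum, Matrix.diag, mul_assoc]
  have key2 : ∑ p, f p ^ 2 = γ ^ 2 * S - 2 * γ * T + d := by
    have expand : ∀ p : Fin d × Fin d, f p ^ 2 =
        γ ^ 2 * A p.1 p.2 ^ 2 - 2 * γ * ((if p.1 = p.2 then 1 else 0) * A p.1 p.2)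
          + (if p.1 = p.2 then 1 else 0) := by
      intro p
      simp only [hf]
      by_cases h : p.1 = p.2 <;> simp [h] <;> ring
    rw [Finset.sum_congr rfl (fun p _ => expand p), Finset.sum_add_distrib,
      Finset.sum_sub_distrib]
    have h1 : ∑ p : Fin d × Fin d, γ ^ 2 * A p.1 p.2 ^ 2 = γ ^ 2 * S := by
      rw [hS, ← Finset.mul_sum, Fintype.sum_prod_type]
    have h2 : ∑ p : Fin d × Fin d, 2 * γ * ((if p.1 = p.2 then 1 else 0) * A p.1 p.2)
        = 2 * γ * T := by
      rw [← Finset.mul_sum, Fintype.sum_prod_type]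
      simp [Matrix.trace, Matrix.diag, hT, Finset.sum_ite_eq, ite_mul]
    have h3 : ∑ p : Fin d × Fin d, (if p.1 = p.2 then (1:ℝ) else 0) = d := by
      rw [Fintype.sum_prod_type]
      simp [Finset.sum_ite_eq]
    rw [h1, h2, h3]
  have hdpos : (0:ℝ) < (d:ℝ) - 1 + ε := by
    have : (2:ℝ) ≤ (d:ℝ) := by exact_mod_cast hd
    linarith
  have hT2 : (0:ℝ) < T ^ 2 := pow_pos htr 2
  have hST : S * ((d:ℝ) - 1 + ε) ≤ T ^ 2 := by
    rw [div_le_div_iff₀ hT2 hdpos] at hcordes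
    linarith
  have hTS : (d:ℝ) - 1 + ε ≤ T ^ 2 / S := by
    rw [le_div_iff₀ hSpos]; linarith
  have hfsum : ∑ p, f p ^ 2 ≤ 1 - ε := by
    rw [key2, hγ]
    have : (T / S) ^ 2 * S - 2 * (T / S) * T + d = d - T ^ 2 / S := by
      field_simp; ring
    rw [this]
    linarith
  have hQnn : 0 ≤ ∑ p, g p ^ 2 := Finset.sum_nonneg fun p _ => sq_nonneg _
  have hcs := Finset.sum_mul_sq_le_sq_mul_sq Finset.univ f g
  have hkey : (γ * (∑ i, ∑ j, A i j * B i j) - Matrix.trace B) ^ 2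
      ≤ (1 - ε) * ∑ p, g p ^ 2 := by
    rw [key1]
    calc (∑ p, f p * g p) ^ 2 ≤ (∑ p, f p ^ 2) * ∑ p, g p ^ 2 := hcs
      _ ≤ (1 - ε) * ∑ p, g p ^ 2 := mul_le_mul_of_nonneg_right hfsum hQnn
  have hQeq : ∑ p, g p ^ 2 = ∑ i, ∑ j, B i j ^ 2 := by
    rw [Fintype.sum_prod_type]
  calc |γ * (∑ i, ∑ j, A i j * B i j) - Matrix.trace B|
      = Real.sqrt ((γ * (∑ i, ∑ j, A i j * B i j) - Matrix.trace B) ^ 2) :=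
        (Real.sqrt_sq_eq_abs _).symm
    _ ≤ Real.sqrt ((1 - ε) * ∑ p, g p ^ 2) := Real.sqrt_le_sqrt hkey
    _ = Real.sqrt (1 - ε) * Real.sqrt (∑ i, ∑ j, B i j ^ 2) := by
        rw [Real.sqrt_mul (by linarith), hQeq]
end

section
/- Let d ≥ 2, ε ∈ (0,1], A a symmetric d×d real matrix with tr A > 0 satisfying the Cordes condition |A|²/(tr A)² ≤ 1/(d-1+ε), and γ = tr(A)/|A|². Then for every d×d real matrix B, |γ (A:B)| ≥ |tr B| − √(1−ε)|B|. -/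
theorem cordes_gamma_lower_estimate (d : ℕ) (hd : 2 ≤ d) (ε : ℝ) (hε0 : 0 < ε) (hε1 : ε ≤ 1)
    (A : Matrix (Fin d) (Fin d) ℝ) (hsymm : A.IsSymm)
    (htr : 0 < Matrix.trace A)
    (hcordes : (∑ i, ∑ j, A i j ^ 2) / (Matrix.trace A) ^ 2 ≤ 1 / ((d : ℝ) - 1 + ε))
    (γ : ℝ) (hγ : γ = Matrix.trace A / (∑ i, ∑ j, A i j ^ 2))
    (B : Matrix (Fin d) (Fin d) ℝ) :
    |γ * (∑ i, ∑ j, A i j * B i j)| ≥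
      |Matrix.trace B| - Real.sqrt (1 - ε) * Real.sqrt (∑ i, ∑ j, B i j ^ 2) := by
  set S : ℝ := ∑ i, ∑ j, A i j ^ 2 with hS
  have hd2 : (2:ℝ) ≤ d := by exact_mod_cast hd
  have hden : 0 < (d:ℝ) - 1 + ε := by linarith
  have hSnn : 0 ≤ S := by positivity
  have hSpos : 0 < S := by
    rcases hSnn.lt_or_eq with h | h
    · exact h
    · exfalso
      have hz : ∀ i j, A i j = 0 := by
        intro i j
        have h1 : ∀ i ∈ Finset.univ, (0:ℝ) ≤ ∑ j, A i j ^ 2 := by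
          intro i _; positivity
        have := (Finset.sum_eq_zero_iff_of_nonneg h1).mp h.symm i (Finset.mem_univ i)
        have h2 : ∀ j ∈ Finset.univ, (0:ℝ) ≤ A i j ^ 2 := by intro j _; positivity
        have := (Finset.sum_eq_zero_iff_of_nonneg h2).mp this j (Finset.mem_univ j)
        exact pow_eq_zero_iff (by norm_num) |>.mp this
      have : Matrix.trace A = 0 := by
        simp [Matrix.trace, Matrix.diag, hz]
      linarith
  set T : ℝ := Matrix.trace A with hT
  have hkey : ((d:ℝ) - 1 + ε) * S ≤ T ^ 2 := by
    have := (div_le_div_iff₀ (by positivity) hden).mp hcordes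
    linarith
  -- the matrix γ A - I
  have expand : ∀ i j : Fin d, (γ * A i j - (if i = j then (1:ℝ) else 0))^2
      = γ^2 * A i j^2 - 2*γ*(if i = j then A i j else 0) + (if i = j then (1:ℝ) else 0) := by
    intro i j; by_cases h : i = j <;> simp [h] <;> ring
  have hE : (∑ i, ∑ j, (γ * A i j - (if i = j then (1:ℝ) else 0))^2)
      = γ^2 * S - 2*γ*T + d := by
    have : ∀ i : Fin d, (∑ j, (γ * A i j - (if i = j then (1:ℝ) else 0))^2)
        = γ^2 * (∑ j, A i j^2) - 2*γ*(A i i) + 1 := by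
      intro i
      simp_rw [expand, Finset.sum_add_distrib, Finset.sum_sub_distrib, ← Finset.mul_sum,
        Finset.sum_ite_eq, Finset.mem_univ, if_true]
    simp_rw [this, Finset.sum_add_distrib, Finset.sum_sub_distrib, ← Finset.mul_sum,
      Finset.sum_const, Finset.card_univ, Fintype.card_fin, nsmul_eq_mul, mul_one]
    simp [hS, hT, Matrix.trace, Matrix.diag]
  have hγS : γ * S = T := by rw [hγ]; field_simp
  have hEval : γ^2 * S - 2*γ*T + d = (d:ℝ) - T^2 / S := by
    have h1 : γ^2 * S = T^2 / S := by
      rw [hγ]; field_simp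
    have h2 : γ * T = T^2 / S := by
      rw [hγ]; field_simp
    rw [h1]; rw [show 2*γ*T = 2*(γ*T) by ring, h2]; ring
  have hEle : (∑ i, ∑ j, (γ * A i j - (if i = j then (1:ℝ) else 0))^2) ≤ 1 - ε := by
    rw [hE, hEval]
    have : (d:ℝ) - 1 + ε ≤ T^2 / S := (le_div_iff₀ hSpos).mpr hkey
    linarith
  -- Cauchy-Schwarz
  set P : ℝ := ∑ i, ∑ j, A i j * B i j with hP
  set NB : ℝ := ∑ i, ∑ j, B i j ^ 2 with hNB
  have hNBnn : 0 ≤ NB := Finset.sum_nonneg fun i _ => Finset.sum_nonneg fun j _ => sq_nonneg _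
  have hsum : (∑ i, ∑ j, (γ * A i j - (if i = j then (1:ℝ) else 0)) * B i j)
      = γ * P - Matrix.trace B := by
    have : ∀ i : Fin d, (∑ j, (γ * A i j - (if i = j then (1:ℝ) else 0)) * B i j)
        = γ * (∑ j, A i j * B i j) - B i i := by
      intro i
      have : ∀ j, (γ * A i j - (if i = j then (1:ℝ) else 0)) * B i j
          = γ * (A i j * B i j) - (if i = j then B i j else 0) := by
        intro j; by_cases h : i = j <;> simp [h] <;> ring
      simp_rw [this, Finset.sum_sub_distrib, ← Finset.mul_sum,
        Finset.sum_ite_eq, Finset.mem_univ, if_true]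
    simp_rw [this, Finset.sum_sub_distrib, ← Finset.mul_sum]
    simp [hP, Matrix.trace, Matrix.diag]
  have hCS : |γ * P - Matrix.trace B| ≤ Real.sqrt (1 - ε) * Real.sqrt NB := by
    rw [← hsum]
    set f : Fin d × Fin d → ℝ := fun p => γ * A p.1 p.2 - (if p.1 = p.2 then (1:ℝ) else 0)
    set g : Fin d × Fin d → ℝ := fun p => B p.1 p.2
    have hrw : (∑ i, ∑ j, (γ * A i j - (if i = j then (1:ℝ) else 0)) * B i j)
        = ∑ p : Fin d × Fin d, f p * g p :=
      (Fintype.sum_prod_type (fun p : Fin d × Fin d => f p * g p)).symm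
    have hrwf : (∑ i, ∑ j, (γ * A i j - (if i = j then (1:ℝ) else 0))^2)
        = ∑ p : Fin d × Fin d, f p ^ 2 :=
      (Fintype.sum_prod_type (fun p : Fin d × Fin d => f p ^ 2)).symm
    have hrwg : NB = ∑ p : Fin d × Fin d, g p ^ 2 := by
      rw [hNB]; exact (Fintype.sum_prod_type (fun p : Fin d × Fin d => g p ^ 2)).symm
    have cs2 : (∑ p : Fin d × Fin d, f p * g p)^2
        ≤ (∑ p : Fin d × Fin d, f p ^ 2) * (∑ p : Fin d × Fin d, g p ^ 2) := by
      exact Finset.sum_mul_sq_le_sq_mul_sq Finset.univ f g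
    rw [hrw]
    have h1 : |∑ p : Fin d × Fin d, f p * g p|
        ≤ Real.sqrt ((∑ p : Fin d × Fin d, f p ^ 2) * (∑ p : Fin d × Fin d, g p ^ 2)) := by
      rw [← Real.sqrt_sq_eq_abs]
      exact Real.sqrt_le_sqrt cs2
    refine h1.trans ?_
    rw [Real.sqrt_mul (by positivity)]
    have e1 : Real.sqrt (∑ p : Fin d × Fin d, f p ^ 2) ≤ Real.sqrt (1 - ε) :=
      Real.sqrt_le_sqrt (by rw [← hrwf]; exact hEle)
    have e2 : Real.sqrt (∑ p : Fin d × Fin d, g p ^ 2) = Real.sqrt NB := by rw [hrwg]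
    rw [e2]
    exact mul_le_mul_of_nonneg_right e1 (Real.sqrt_nonneg _)
  have h0 : |Matrix.trace B| ≤ |γ * P| + |γ * P - Matrix.trace B| := by
    have := abs_sub_abs_le_abs_sub (Matrix.trace B) (γ * P)
    calc |Matrix.trace B| ≤ |γ * P| + |Matrix.trace B - γ * P| := by
          have := abs_add_le (γ * P) (Matrix.trace B - γ * P); simpa using this
      _ = |γ * P| + |γ * P - Matrix.trace B| := by rw [abs_sub_comm]
  linarith [hCS, h0]
end
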